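/- If G is a finite simple graph with at least one edge and α∘(G) = χ(G), then χ_c(G) = χ(G). -/

import Mathlib

open SimpleGraph

/-- A list of vertices forms a cycle of `G` (single edges count as cycles of length 2):
at least two vertices, no repetitions, and consecutive vertices (cyclically) adjacent. -/
def IsCycleList {V : Type*} (G : SimpleGraph V) (l : List V) : Prop :=
  2 ≤ l.length ∧ l.Nodup ∧
    ∀ i : Fin l.length,
      G.Adj (l.get i) (l.get ⟨((i : ℕ) + 1) % l.length, Nat.mod_lt _ i.pos⟩)

/-- A cycle of `G` is monotonic for a circular ordering `σ` of the vertices if, after a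
suitable rotation, its vertices appear in increasing order of position, i.e. the vertices
`u_1, …, u_k, u_1` of the cycle appear in this cyclic order in `σ`. -/
def IsMonotonicCycle {V : Type*} [Fintype V] (G : SimpleGraph V)
    (σ : V ≃ Fin (Fintype.card V)) (l : List V) : Prop :=
  IsCycleList G l ∧ ∃ r : ℕ, ((l.rotate r).map fun x => (σ x : ℕ)).Chain' (· < ·)

/-- The circular altitude of `G`: the largest `k` such that every circular ordering of
the vertices of `G` contains a monotonic cycle with at least `k` vertices. -/
noncomputable def circAltitude {V : Type*} [Fintype V] (G : SimpleGraph V) : ℕ :=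
  sSup {k | ∀ σ : V ≃ Fin (Fintype.card V), ∃ l : List V,
    IsMonotonicCycle G σ l ∧ k ≤ l.length}

/-- A `(p,q)`-colouring of `G`: a map `c : V(G) → {1, …, p}` (encoded as `Fin p`) such
that `q ≤ |c u − c v| ≤ p − q` for every edge `uv` of `G`. -/
def IsPQColoring {V : Type*} (G : SimpleGraph V) (p q : ℕ) (c : V → Fin p) : Prop :=
  ∀ a b : V, G.Adj a b →
    (q : ℤ) ≤ |((c a : ℕ) : ℤ) - ((c b : ℕ) : ℤ)| ∧
      |((c a : ℕ) : ℤ) - ((c b : ℕ) : ℤ)| ≤ (p : ℤ) - (q : ℤ)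

/-- The circular chromatic number `χ_c(G)`: the infimum of `p / q` over all pairs of
positive integers `(p, q)` for which `G` admits a `(p,q)`-colouring. -/
noncomputable def circChromNum {V : Type*} [Fintype V] (G : SimpleGraph V) : ℝ :=
  sInf {x : ℝ | ∃ p q : ℕ, 0 < p ∧ 0 < q ∧ x = (p : ℝ) / (q : ℝ) ∧
    ∃ c : V → Fin p, IsPQColoring G p q c}

/-! ### Auxiliary lemmas -/

lemma isCycleList_rotate {V : Type*} (G : SimpleGraph V) {l : List V} (r : ℕ)
    (hl : IsCycleList G l) : IsCycleList G (l.rotate r) := by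
  obtain ⟨h2, hnd, hadj⟩ := hl
  have hlen : (l.rotate r).length = l.length := l.length_rotate r
  refine ⟨by omega, (List.nodup_rotate).2 hnd, ?_⟩
  intro i
  have hm : 0 < l.length := by omega
  rw [List.get_rotate, List.get_rotate]
  have hidx : ((((i : ℕ) + 1) % (l.rotate r).length) + r) % l.length
      = ((((i : ℕ) + r) % l.length) + 1) % l.length := by
    simp only [hlen, Nat.mod_add_mod]
    congr 1
    omega
  have h := hadj ⟨((i : ℕ) + r) % l.length, Nat.mod_lt _ hm⟩
  convert h using 3

/-- An ordering of the vertices compatible with a colouring. -/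
lemma exists_sorted_equiv {V : Type*} [Fintype V] {p : ℕ} (c : V → Fin p) :
    ∃ σ : V ≃ Fin (Fintype.card V),
      ∀ x y : V, σ x < σ y → (((c x : ℕ) : ℤ) ≤ ((c y : ℕ) : ℤ)) := by
  classical
  set n := Fintype.card V with hn
  let e := Fintype.equivFin V
  let g : V → ℕ := fun v => (c v : ℕ) * n + (e v : ℕ)
  have hgmono : ∀ u v : V, (c u : ℕ) < (c v : ℕ) → g u < g v := by
    intro u v huv
    have hu : (e u : ℕ) < n := (e u).isLt
    calc g u = (c u : ℕ) * n + (e u : ℕ) := rfl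
      _ < (c u : ℕ) * n + n := by omega
      _ = ((c u : ℕ) + 1) * n := by ring
      _ ≤ (c v : ℕ) * n := Nat.mul_le_mul_right n huv
      _ ≤ g v := Nat.le_add_right _ _
  have hginj : Function.Injective g := by
    intro u v huv
    have hcc : (c u : ℕ) = (c v : ℕ) := by
      rcases Nat.lt_trichotomy (c u : ℕ) (c v : ℕ) with hlt | heq | hgt
      · exact absurd huv (Nat.ne_of_lt (hgmono u v hlt))
      · exact heq
      · exact absurd huv.symm (Nat.ne_of_lt (hgmono v u hgt))
    have hee : (e u : ℕ) = (e v : ℕ) := by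
      have hsum : (c u : ℕ) * n + (e u : ℕ) = (c v : ℕ) * n + (e v : ℕ) := huv
      rw [hcc] at hsum
      exact Nat.add_left_cancel hsum
    exact e.injective (Fin.ext hee)
  let s : Finset ℕ := Finset.univ.image g
  have hcard : s.card = n := by
    rw [Finset.card_image_of_injective _ hginj, Finset.card_univ]
  let ψ := s.orderIsoOfFin hcard
  have hmem : ∀ v : V, g v ∈ s := fun v => Finset.mem_image_of_mem g (Finset.mem_univ v)
  let σ₀ : V → Fin n := fun v => ψ.symm ⟨g v, hmem v⟩
  have hσmono : ∀ u v : V, (c u : ℕ) < (c v : ℕ) → σ₀ u < σ₀ v := by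
    intro u v huv
    exact ψ.symm.strictMono (Subtype.mk_lt_mk.2 (hgmono u v huv))
  have hσinj : Function.Injective σ₀ := by
    intro u v huv
    have hsub : (⟨g u, hmem u⟩ : s) = ⟨g v, hmem v⟩ := ψ.symm.injective huv
    exact hginj (Subtype.mk_eq_mk.1 hsub)
  have hbij : Function.Bijective σ₀ :=
    (Fintype.bijective_iff_injective_and_card σ₀).2 ⟨hσinj, by simp [hn]⟩
  refine ⟨Equiv.ofBijective σ₀ hbij, ?_⟩
  intro x y hxy
  by_contra hcon
  push_neg at hcon
  have hvv : (c y : ℕ) < (c x : ℕ) := by exact_mod_cast hcon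
  exact absurd (hσmono y x hvv) (lt_asymm hxy)

/-- The key bound: a cycle of a `(p,q)`-coloured graph whose positions in a
colour-sorted ordering are strictly increasing has length at most `p / q`. -/
lemma cycle_length_mul_le {V : Type*} [Fintype V] (G : SimpleGraph V) {p q : ℕ}
    {c : V → Fin p} (hc : IsPQColoring G p q c) (σ : V ≃ Fin (Fintype.card V))
    (hσ : ∀ x y : V, σ x < σ y → (((c x : ℕ) : ℤ) ≤ ((c y : ℕ) : ℤ)))
    {L : List V} (hcyc : IsCycleList G L)
    (hch : (L.map fun x => ((σ x : ℕ))).Chain' (· < ·)) :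
    L.length * q ≤ p := by
  obtain ⟨h2, hnd, hadj⟩ := hcyc
  have hm0 : 0 < L.length := by omega
  -- consecutive colour step
  have hstep : ∀ i : ℕ, ∀ hi : i + 1 < L.length,
      ((c (L.get ⟨i, by omega⟩) : ℕ) : ℤ) + q ≤ ((c (L.get ⟨i + 1, hi⟩) : ℕ) : ℤ) := by
    intro i hi
    set u := L.get ⟨i, by omega⟩ with hu
    set v := L.get ⟨i + 1, hi⟩ with hv
    have hadj' : G.Adj u v := by
      have h := hadj ⟨i, by omega⟩
      have hmod : ((i : ℕ) + 1) % L.length = i + 1 := Nat.mod_eq_of_lt hi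
      convert h using 3
      exact hmod.symm
    have hlt : σ u < σ v := by
      have h := List.isChain_iff_getElem.mp hch i (by simp; omega)
      simp only [List.getElem_map] at h
      have h' : (σ u : ℕ) < (σ v : ℕ) := by
        convert h using 3 <;> simp [hu, hv]
      exact h'
    have hle : ((c u : ℕ) : ℤ) ≤ ((c v : ℕ) : ℤ) := hσ u v hlt
    obtain ⟨h1, _⟩ := hc u v hadj'
    rw [abs_sub_comm, abs_of_nonneg (by linarith)] at h1
    linarith
  -- telescoping
  have htel : ∀ j : ℕ, ∀ hj : j < L.length,
      (j : ℤ) * q + ((c (L.get ⟨0, hm0⟩) : ℕ) : ℤ) ≤ ((c (L.get ⟨j, hj⟩) : ℕ) : ℤ) := by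
    intro j
    induction j with
    | zero => intro hj; simp
    | succ i ih =>
      intro hj
      have h1 := ih (by omega)
      have h2 := hstep i hj
      push_cast
      push_cast at h1 h2
      linarith
  -- the wrap-around edge
  obtain ⟨j, hj⟩ : ∃ j, L.length = j + 1 := ⟨L.length - 1, by omega⟩
  have hj1 : j < L.length := by omega
  have hwrap : G.Adj (L.get ⟨j, hj1⟩) (L.get ⟨0, hm0⟩) := by
    have h := hadj ⟨j, hj1⟩
    have hmod : (j + 1) % L.length = 0 := by
      rw [← hj, Nat.mod_self]
    convert h using 3
    exact hmod.symm
  have hT := htel j hj1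
  obtain ⟨_, hub⟩ := hc _ _ hwrap
  have hjcast : (j : ℤ) = (L.length : ℤ) - 1 := by omega
  have hdiff : (0 : ℤ) ≤ ((c (L.get ⟨j, hj1⟩) : ℕ) : ℤ)
      - ((c (L.get ⟨0, hm0⟩) : ℕ) : ℤ) := by
    have hq0 : (0 : ℤ) ≤ q := Int.ofNat_nonneg q
    nlinarith
  rw [abs_of_nonneg hdiff] at hub
  have hfin : (L.length : ℤ) * q ≤ p := by nlinarith
  exact_mod_cast hfin

/-- For any circular ordering, a single edge gives a monotonic cycle of length 2. -/
lemma exists_monotone_edge {V : Type*} [Fintype V] (G : SimpleGraph V) {a b : V}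
    (hab : G.Adj a b) (σ : V ≃ Fin (Fintype.card V)) :
    ∃ l : List V, IsMonotonicCycle G σ l ∧ 2 ≤ l.length := by
  have hne : a ≠ b := hab.ne
  have hσne : σ a ≠ σ b := fun h => hne (σ.injective h)
  rcases hσne.lt_or_gt with hlt | hgt
  · refine ⟨[a, b], ⟨⟨by simp, by simp [hne], ?_⟩, 0, ?_⟩, by simp⟩
    · intro i
      fin_cases i
      · exact hab
      · show G.Adj ([a, b].get ⟨1, by simp⟩) _
        simp [List.get]
        exact hab.symm
    · simpa [List.Chain'] using hlt
  · refine ⟨[b, a], ⟨⟨by simp, by simp [Ne.symm hne], ?_⟩, 0, ?_⟩, by simp⟩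
    · intro i
      fin_cases i
      · exact hab.symm
      · show G.Adj ([b, a].get ⟨1, by simp⟩) _
        simp [List.get]
        exact hab
    · simpa [List.Chain'] using hgt

/-- If `G` is a finite simple graph with at least one edge and `α∘(G) = χ(G)`, then
`χ_c(G) = χ(G)`. -/
theorem circChromNum_eq_chromaticNumber {V : Type*} [Fintype V]
    (G : SimpleGraph V) (hedge : ∃ a b : V, G.Adj a b)
    (h : (circAltitude G : ℕ∞) = G.chromaticNumber) :
    circChromNum G = (G.chromaticNumber.toNat : ℝ) := by
  classical
  obtain ⟨a, b, hab⟩ := hedge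
  have hV : Nonempty V := ⟨a⟩
  set k := G.chromaticNumber.toNat with hk
  have hcol : G.Colorable k := G.colorable_chromaticNumber_of_fintype
  have halt : circAltitude G = k := by
    have := congrArg ENat.toNat h
    simpa using this
  -- the sSup defining circAltitude is attained
  have hSset : ∀ σ : V ≃ Fin (Fintype.card V), ∃ l : List V,
      IsMonotonicCycle G σ l ∧ circAltitude G ≤ l.length := by
    have hmem : circAltitude G ∈ {k | ∀ σ : V ≃ Fin (Fintype.card V), ∃ l : List V,
        IsMonotonicCycle G σ l ∧ k ≤ l.length} := by
      apply Nat.sSup_mem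
      · exact ⟨0, fun σ => by
          obtain ⟨l, hl, _⟩ := exists_monotone_edge G hab σ
          exact ⟨l, hl, Nat.zero_le _⟩⟩
      · refine ⟨Fintype.card V, fun x hx => ?_⟩
        obtain ⟨l, ⟨⟨_, hnd, _⟩, _⟩, hlen⟩ := hx (Fintype.equivFin V)
        exact hlen.trans hnd.length_le_card
    exact hmem
  -- set of values of (p,q)-colourings
  set T : Set ℝ := {x : ℝ | ∃ p q : ℕ, 0 < p ∧ 0 < q ∧ x = (p : ℝ) / (q : ℝ) ∧
    ∃ c : V → Fin p, IsPQColoring G p q c} with hT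
  -- upper bound: k ∈ T
  obtain ⟨C⟩ := hcol
  have hk0 : 0 < k := (C a).pos
  have hkT : (k : ℝ) ∈ T := by
    refine ⟨k, 1, hk0, one_pos, by simp, fun v => C v, ?_⟩
    intro u v huv
    have hne : ((C u : ℕ) : ℤ) ≠ ((C v : ℕ) : ℤ) := by
      intro hC
      exact C.valid huv (Fin.ext (by exact_mod_cast hC))
    constructor
    · simpa using Int.one_le_abs (sub_ne_zero.mpr hne)
    · have h1 : ((C u : ℕ) : ℤ) < k := by exact_mod_cast (C u).isLt
      have h2 : ((C v : ℕ) : ℤ) < k := by exact_mod_cast (C v).isLt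
      have h3 : (0 : ℤ) ≤ ((C u : ℕ) : ℤ) := Int.ofNat_nonneg _
      have h4 : (0 : ℤ) ≤ ((C v : ℕ) : ℤ) := Int.ofNat_nonneg _
      rw [abs_sub_le_iff]
      push_cast
      omega
  -- lower bound: every element of T is at least k
  have hlow : ∀ x ∈ T, (k : ℝ) ≤ x := by
    rintro x ⟨p, q, hp, hq, rfl, c, hpq⟩
    obtain ⟨σ, hσ⟩ := exists_sorted_equiv c
    obtain ⟨l, ⟨hcyc, r, hch⟩, hlen⟩ := hSset σ
    rw [halt] at hlen
    have hcycr := isCycleList_rotate G r hcyc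
    have hbound := cycle_length_mul_le G hpq σ hσ hcycr hch
    rw [List.length_rotate] at hbound
    have hkq : k * q ≤ p := le_trans (Nat.mul_le_mul_right q hlen) hbound
    rw [le_div_iff₀ (by exact_mod_cast hq)]
    exact_mod_cast hkq
  -- conclude
  have hbdd : BddBelow T := by
    refine ⟨0, ?_⟩
    rintro x ⟨p, q, hp, hq, rfl, _⟩
    positivity
  exact le_antisymm (csInf_le hbdd hkT) (le_csInf ⟨_, hkT⟩ hlow)
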